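/- Let 0<q<1. The q-digamma function ψ_q has a unique zero x₀ in the interval (1,2): there exists x₀ ∈ (1,2) with ψ_q(x₀)=0, and ψ_q(x)≠0 for every x ∈ (1,2) with x ≠ x₀ (indeed ψ_q(x)≠0 for every positive x ≠ x₀). -/
import Mathlib
open Real

/-- The q-digamma function: ψ_q(x) = -log(1-q) + (log q)·∑_{n=1}^∞ q^{nx}/(1-q^n). -/
noncomputable def qDigamma (q x : ℝ) : ℝ :=
  -Real.log (1 - q) + Real.log q * ∑' n : ℕ, q ^ (((n : ℝ) + 1) * x) / (1 - q ^ (n + 1))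

/-- The q-gamma function: Γ_q(x) = (q;q)_∞/(q^x;q)_∞ · (1-q)^{1-x}. -/
noncomputable def qGamma (q x : ℝ) : ℝ :=
  ((∏' i : ℕ, (1 - q ^ (i + 1))) / ∏' i : ℕ, (1 - q ^ (x + (i : ℝ)))) * (1 - q) ^ (1 - x)

/-- The q-bracket: [x]_q = (1-q^x)/(1-q). -/
noncomputable def qBracket (q x : ℝ) : ℝ := (1 - q ^ x) / (1 - q)

section aux
variable {q : ℝ}

lemma qd_pow_pos (hq0 : 0 < q) (hq1 : q < 1) (n : ℕ) : 0 < 1 - q ^ (n + 1) := by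
  have : q ^ (n+1) < 1 := pow_lt_one₀ hq0.le hq1 (Nat.succ_ne_zero n)
  linarith

lemma qd_rpow_eq (hq0 : 0 < q) (x : ℝ) (n : ℕ) :
    q ^ (((n:ℝ)+1)*x) = (q ^ x) ^ (n+1) := by
  rw [mul_comm, Real.rpow_mul hq0.le, ← Real.rpow_natCast (q ^ x) (n+1)]
  push_cast
  ring_nf

lemma qd_summable (hq0 : 0 < q) (hq1 : q < 1) {x : ℝ} (hx : 0 < x) :
    Summable (fun n : ℕ => q ^ (((n:ℝ)+1)*x) / (1 - q ^ (n + 1))) := by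
  have hr0 : 0 < q ^ x := Real.rpow_pos_of_pos hq0 x
  have hr1 : q ^ x < 1 := Real.rpow_lt_one hq0.le hq1 hx
  apply Summable.of_nonneg_of_le
    (f := fun n : ℕ => (q ^ x) ^ (n+1) / (1 - q))
  · intro n
    have := qd_pow_pos hq0 hq1 n
    have := Real.rpow_pos_of_pos hq0 (((n:ℝ)+1)*x)
    positivity
  · intro n
    rw [qd_rpow_eq hq0 x n]
    apply div_le_div_of_nonneg_left (by positivity) (by linarith)
    have : q ^ (n+1) ≤ q := by
      calc q ^ (n+1) ≤ q ^ 1 := pow_le_pow_of_le_one hq0.le hq1.le (by omega)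
      _ = q := pow_one q
    linarith
  · apply Summable.div_const
    exact ((summable_geometric_of_lt_one hr0.le hr1).mul_left (q ^ x)).congr
      (fun n => by ring)

lemma qd_strictMono (hq0 : 0 < q) (hq1 : q < 1) :
    StrictMonoOn (qDigamma q) (Set.Ioi 0) := by
  intro x hx y hy hxy
  simp only [qDigamma]
  have hlog : Real.log q < 0 := Real.log_neg hq0 hq1
  have hsum : (∑' n : ℕ, q ^ (((n:ℝ)+1)*y) / (1 - q ^ (n + 1)))
      < ∑' n : ℕ, q ^ (((n:ℝ)+1)*x) / (1 - q ^ (n + 1)) := by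
    apply Summable.tsum_lt_tsum (i := 0)
    · intro n
      have h1 := qd_pow_pos hq0 hq1 n
      apply div_le_div_of_nonneg_right ?_ h1.le
      exact Real.rpow_le_rpow_of_exponent_ge hq0 hq1.le
        (by have hn : (0:ℝ) ≤ (n:ℝ)+1 := by positivity
            nlinarith)
    · have h1 := qd_pow_pos hq0 hq1 0
      have h2 : q ^ ((↑(0:ℕ) + 1) * y) < q ^ ((↑(0:ℕ) + 1) * x) :=
        Real.rpow_lt_rpow_of_exponent_gt hq0 hq1 (by push_cast; linarith)
      exact div_lt_div_of_pos_right h2 h1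
    · exact qd_summable hq0 hq1 (hx.trans hxy)
    · exact qd_summable hq0 hq1 hx
  nlinarith [hsum, hlog]

end aux

lemma qd_hasSum_log (hq0 : 0 < q) (hq1 : q < 1) :
    HasSum (fun n : ℕ => q ^ (n+1) / ((n:ℝ)+1)) (-Real.log (1 - q)) := by
  have h := hasSum_pow_div_log_of_abs_lt_one (x := q)
    (by rw [abs_of_pos hq0]; exact hq1)
  convert h using 2 with n

lemma qd_one_neg (hq0 : 0 < q) (hq1 : q < 1) : qDigamma q 1 < 0 := by
  have hlog1 : Real.log q < q - 1 := Real.log_lt_sub_one_of_pos hq0 hq1.ne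
  have hA := qd_hasSum_log hq0 hq1
  have hterm : ∀ n : ℕ, q ^ (((n:ℝ)+1)*(1:ℝ)) = q ^ (n+1) := fun n => by
    rw [qd_rpow_eq hq0, Real.rpow_one]
  have hS : Summable (fun n : ℕ => q ^ (n+1) / (1 - q ^ (n + 1))) :=
    (qd_summable hq0 hq1 one_pos).congr (fun n => by rw [hterm n])
  have key : (∑' n : ℕ, q ^ (n+1) / ((n:ℝ)+1)) <
      ∑' n : ℕ, (-Real.log q) * (q ^ (n+1) / (1 - q ^ (n+1))) := by
    apply Summable.tsum_lt_tsum (i := 0) ?_ ?_ hA.summable (hS.mul_left _)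
    · intro n
      have h1 := qd_pow_pos hq0 hq1 n
      have hp : (0:ℝ) < q ^ (n+1) := pow_pos hq0 _
      have hm : (0:ℝ) < (n:ℝ)+1 := by positivity
      have hber := one_add_mul_le_pow (show (-2:ℝ) ≤ q-1 by linarith) (n+1)
      rw [show (1:ℝ)+(q-1) = q by ring] at hber
      push_cast at hber
      have h2 : 1 - q ^ (n+1) ≤ ((n:ℝ)+1)*(1-q) := by nlinarith
      show q ^ (n+1) / ((n:ℝ)+1) ≤ -Real.log q * (q ^ (n+1) / (1 - q ^ (n+1)))
      rw [mul_div_assoc']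
      rw [div_le_div_iff₀ hm h1]
      nlinarith [mul_le_mul_of_nonneg_left h2 hp.le,
        mul_lt_mul_of_pos_left hlog1 (mul_pos hp hm)]
    · have h1 := qd_pow_pos hq0 hq1 0
      have hp : (0:ℝ) < q ^ (0+1) := pow_pos hq0 _
      have hber : 1 - q ^ (0+1) ≤ ((0:ℝ)+1)*(1-q) := by norm_num
      show q ^ (0+1) / (((0:ℕ):ℝ)+1) < -Real.log q * (q ^ (0+1) / (1 - q ^ (0+1)))
      rw [mul_div_assoc']
      rw [div_lt_div_iff₀ (by norm_num : (0:ℝ) < (0:ℕ)+1) h1]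
      push_cast
      nlinarith
  have hrw : (∑' n : ℕ, q ^ (((n:ℝ)+1)*(1:ℝ)) / (1 - q ^ (n + 1)))
      = ∑' n : ℕ, q ^ (n+1) / (1 - q ^ (n+1)) := tsum_congr (fun n => by rw [hterm n])
  have hmul : (∑' n : ℕ, (-Real.log q) * (q ^ (n+1) / (1 - q ^ (n+1))))
      = (-Real.log q) * ∑' n : ℕ, q ^ (n+1) / (1 - q ^ (n+1)) := tsum_mul_left
  simp only [qDigamma]
  rw [hrw]
  rw [hA.tsum_eq] at key
  rw [hmul] at key
  linarith

lemma qd_bern2 (hq0 : 0 < q) (hq1 : q < 1) (m : ℕ) :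
    ((m:ℝ)+1) * q ^ (m+1) * (1-q) ≤ q * (1 - q ^ (m+1)) := by
  have hgeom : 1 - q ^ (m+1) = (1-q) * ∑ i ∈ Finset.range (m+1), q ^ i := by
    have h := geom_sum_mul q (m+1)
    linear_combination h
  have hsum : ((m:ℝ)+1) * q ^ m ≤ ∑ i ∈ Finset.range (m+1), q ^ i := by
    calc ((m:ℝ)+1) * q ^ m = ∑ _i ∈ Finset.range (m+1), q ^ m := by
          rw [Finset.sum_const, Finset.card_range]; push_cast; ring
    _ ≤ ∑ i ∈ Finset.range (m+1), q ^ i :=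
        Finset.sum_le_sum (fun i hi => pow_le_pow_of_le_one hq0.le hq1.le
          (by have := Finset.mem_range.mp hi; omega))
  rw [hgeom]
  have h5 := mul_le_mul_of_nonneg_left hsum
    (mul_nonneg hq0.le (by linarith : (0:ℝ) ≤ 1-q))
  have h7 : ((m:ℝ)+1) * q ^ (m+1) * (1-q) = q*(1-q)*(((m:ℝ)+1)*q^m) := by
    rw [pow_succ]; ring
  nlinarith [h5, h7]

lemma qd_two_pos (hq0 : 0 < q) (hq1 : q < 1) : 0 < qDigamma q 2 := by
  have hlog1 : Real.log q⁻¹ < q⁻¹ - 1 :=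
    Real.log_lt_sub_one_of_pos (by positivity) (by
      intro h; rw [inv_eq_one] at h; exact hq1.ne h)
  rw [Real.log_inv] at hlog1
  have hc : -(q * Real.log q) < 1 - q := by
    have := mul_lt_mul_of_pos_left hlog1 hq0
    have hq' : q * q⁻¹ = 1 := mul_inv_cancel₀ hq0.ne'
    nlinarith
  have hA := qd_hasSum_log hq0 hq1
  have hterm : ∀ n : ℕ, q ^ (((n:ℝ)+1)*(2:ℝ)) = q ^ (n+1) * q ^ (n+1) := fun n => by
    rw [qd_rpow_eq hq0, show (q:ℝ) ^ (2:ℝ) = q ^ (2:ℕ) by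
      rw [← Real.rpow_natCast q 2]; norm_num, ← pow_mul, two_mul, pow_add]
  have hS : Summable (fun n : ℕ => q ^ (n+1) * q ^ (n+1) / (1 - q ^ (n + 1))) :=
    (qd_summable hq0 hq1 two_pos).congr (fun n => by rw [hterm n])
  have key : (∑' n : ℕ, (-Real.log q) * (q ^ (n+1) * q ^ (n+1) / (1 - q ^ (n+1)))) <
      ∑' n : ℕ, q ^ (n+1) / ((n:ℝ)+1) := by
    apply Summable.tsum_lt_tsum (i := 0) ?_ ?_ (hS.mul_left _) hA.summable
    · intro n
      have h1 := qd_pow_pos hq0 hq1 n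
      have hp : (0:ℝ) < q ^ (n+1) := pow_pos hq0 _
      have hm : (0:ℝ) < (n:ℝ)+1 := by positivity
      have hb := qd_bern2 hq0 hq1 n
      show (-Real.log q) * (q ^ (n+1) * q ^ (n+1) / (1 - q ^ (n+1)))
          ≤ q ^ (n+1) / ((n:ℝ)+1)
      rw [mul_div_assoc', div_le_div_iff₀ h1 hm]
      nlinarith [mul_lt_mul_of_pos_left hc (mul_pos (mul_pos hm hp) hp),
        mul_le_mul_of_nonneg_left hb hp.le]
    · have h1 := qd_pow_pos hq0 hq1 0
      show (-Real.log q) * (q ^ (0+1) * q ^ (0+1) / (1 - q ^ (0+1)))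
          < q ^ (0+1) / (((0:ℕ):ℝ)+1)
      rw [mul_div_assoc', div_lt_div_iff₀ h1 (by norm_num : (0:ℝ) < ((0:ℕ):ℝ)+1)]
      push_cast
      nlinarith [mul_lt_mul_of_pos_left hc hq0]
  have hrw : (∑' n : ℕ, q ^ (((n:ℝ)+1)*(2:ℝ)) / (1 - q ^ (n + 1)))
      = ∑' n : ℕ, q ^ (n+1) * q ^ (n+1) / (1 - q ^ (n+1)) :=
    tsum_congr (fun n => by rw [hterm n])
  have hmul : (∑' n : ℕ, (-Real.log q) * (q ^ (n+1) * q ^ (n+1) / (1 - q ^ (n+1))))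
      = (-Real.log q) * ∑' n : ℕ, q ^ (n+1) * q ^ (n+1) / (1 - q ^ (n+1)) := tsum_mul_left
  simp only [qDigamma]
  rw [hrw]
  rw [hA.tsum_eq, hmul] at key
  linarith

lemma qd_continuousOn (hq0 : 0 < q) (hq1 : q < 1) :
    ContinuousOn (qDigamma q) (Set.Icc 1 2) := by
  apply ContinuousOn.add continuousOn_const
  apply ContinuousOn.mul continuousOn_const
  apply continuousOn_tsum (u := fun n : ℕ => q ^ (n+1) / (1 - q))
  · intro n
    apply ContinuousOn.div_const
    apply Continuous.continuousOn
    have he : (fun x : ℝ => q ^ (((n:ℝ)+1)*x))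
        = fun x => Real.exp ((((n:ℝ)+1)*x) * Real.log q) := by
      funext x; rw [Real.rpow_def_of_pos hq0, mul_comm]
    rw [he]
    exact Real.continuous_exp.comp ((continuous_const.mul continuous_id).mul continuous_const)
  · apply Summable.div_const
    exact ((summable_geometric_of_lt_one hq0.le hq1).mul_left q).congr (fun n => by ring)
  · intro n x hx
    have h1 := qd_pow_pos hq0 hq1 n
    have hr : (0:ℝ) ≤ q ^ (((n:ℝ)+1)*x) := (Real.rpow_pos_of_pos hq0 _).le
    rw [Real.norm_eq_abs, abs_of_nonneg (by positivity)]
    apply div_le_div₀ (by positivity) ?_ (by linarith) ?_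
    · have : q ^ (((n:ℝ)+1)*x) ≤ q ^ (((n:ℝ)+1)*(1:ℝ)) :=
        Real.rpow_le_rpow_of_exponent_ge hq0 hq1.le
          (by have hn : (0:ℝ) ≤ (n:ℝ)+1 := by positivity
              nlinarith [hx.1])
      rw [qd_rpow_eq hq0 1 n, Real.rpow_one] at this
      exact this
    · have : q ^ (n+1) ≤ q := by
        calc q ^ (n+1) ≤ q ^ 1 := pow_le_pow_of_le_one hq0.le hq1.le (by omega)
        _ = q := pow_one q
      linarith


/-- ψ_q has a unique zero x₀, which lies in (1,2); ψ_q(x) ≠ 0 for every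
positive x ≠ x₀. -/
theorem qDigamma_unique_zero (q : ℝ) (hq0 : 0 < q) (hq1 : q < 1) :
    ∃ x₀ ∈ Set.Ioo (1 : ℝ) 2, qDigamma q x₀ = 0 ∧
      ∀ x : ℝ, 0 < x → x ≠ x₀ → qDigamma q x ≠ 0 := by
  have h1 : qDigamma q 1 < 0 := qd_one_neg hq0 hq1
  have h2 : 0 < qDigamma q 2 := qd_two_pos hq0 hq1
  have hmono := qd_strictMono hq0 hq1
  have hivt := intermediate_value_Ioo (le_of_lt one_lt_two) (qd_continuousOn hq0 hq1)
  obtain ⟨x₀, hx₀, hfx₀⟩ := hivt (Set.mem_Ioo.mpr ⟨h1, h2⟩)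
  refine ⟨x₀, hx₀, hfx₀, ?_⟩
  intro x hx hne
  have hx₀pos : (0:ℝ) < x₀ := lt_trans one_pos hx₀.1
  rcases hne.lt_or_gt with h | h
  · have := hmono (Set.mem_Ioi.mpr hx) (Set.mem_Ioi.mpr hx₀pos) h
    rw [hfx₀] at this
    exact ne_of_lt this
  · have := hmono (Set.mem_Ioi.mpr hx₀pos) (Set.mem_Ioi.mpr hx) h
    rw [hfx₀] at this
    exact ne_of_gt this
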